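/- With N, q, and the matrices M_U, M_V, M_W as in the context, let u, v, h be nonzero complex numbers with v^N ≠ −1 (so that the matrices 1 + q·M_V(v), 1 + q³·M_V(v), 1 + q·M_V(v)⁻¹, and 1 + q³·M_V(v)⁻¹ are all invertible). Define L_U := (1 + q·M_V(v)⁻¹)⁻¹·(1 + q³·M_V(v)⁻¹)⁻¹·M_U(u), L_V := (1 + q·M_V(v))·(1 + q³·M_V(v))·M_W(u,v,h), and L_W := M_V(v)⁻¹. Then L_V·L_U = q⁴·L_U·L_V, L_W·L_V = q⁴·L_V·L_W, L_U·L_W = q⁴·L_W·L_U, and q²·L_U·L_V·L_W = h·I, where I is the N×N identity matrix. -/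

import Mathlib

open Matrix

/-- The image of the generator `U` of the Chekhov–Fock algebra of the once-punctured torus
under the standard representation: the diagonal matrix with entries `u·q^{4i}`. -/
noncomputable def MU (N : ℕ) (q u : ℂ) : Matrix (Fin N) (Fin N) ℂ :=
  Matrix.diagonal fun i => u * q ^ (4 * (i : ℕ))

/-- The image of the generator `V`: the cyclic shift matrix with entries `v`. -/
noncomputable def MV (N : ℕ) (v : ℂ) : Matrix (Fin N) (Fin N) ℂ :=
  Matrix.of fun i j => if (j : ℕ) = ((i : ℕ) + 1) % N then v else 0

/-- The image of the generator `W`: `q⁻²·h·(M_U(u)·M_V(v))⁻¹`. -/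
noncomputable def MW (N : ℕ) (q u v h : ℂ) : Matrix (Fin N) (Fin N) ℂ :=
  ((q ^ 2)⁻¹ * h) • (MU N q u * MV N v)⁻¹

section Helpers

lemma CF_pow_congr_mod (N : ℕ) (q : ℂ) (hqN : q ^ N = 1) {a b : ℕ} (hab : a % N = b % N) :
    q ^ a = q ^ b := by
  conv_lhs => rw [← Nat.div_add_mod a N, pow_add, pow_mul, hqN, one_pow, one_mul]
  conv_rhs => rw [← Nat.div_add_mod b N, pow_add, pow_mul, hqN, one_pow, one_mul]
  rw [hab]

lemma CF_MV_pow (N : ℕ) (hN : 0 < N) (v : ℂ) (k : ℕ) :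
    (MV N v) ^ k = Matrix.of fun i j : Fin N => if (j : ℕ) = ((i : ℕ) + k) % N then v ^ k else 0 := by
  induction k with
  | zero =>
    ext i j
    simp [Matrix.one_apply, Fin.ext_iff, Nat.mod_eq_of_lt i.isLt, eq_comm]
  | succ k ih =>
    ext i j
    rw [pow_succ, ih]
    simp only [Matrix.mul_apply, Matrix.of_apply, MV]
    rw [Finset.sum_eq_single (⟨((i : ℕ) + k) % N, Nat.mod_lt _ hN⟩ : Fin N)]
    · simp only [Fin.val_mk, if_pos rfl]
      rw [Nat.mod_add_mod, mul_ite, mul_zero, if_pos trivial, ← pow_succ, ← Nat.add_assoc]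
    · intro l _ hl
      rw [if_neg, zero_mul]
      intro hc
      exact hl (Fin.ext hc)
    · intro hmem; exact absurd (Finset.mem_univ _) hmem

lemma CF_MV_pow_N (N : ℕ) (hN : 0 < N) (v : ℂ) :
    (MV N v) ^ N = v ^ N • (1 : Matrix (Fin N) (Fin N) ℂ) := by
  rw [CF_MV_pow N hN v N]
  ext i j
  simp only [Matrix.of_apply, Matrix.smul_apply, Matrix.one_apply, smul_eq_mul]
  rw [Nat.add_mod_right, Nat.mod_eq_of_lt i.isLt]
  by_cases hij : (j : ℕ) = (i : ℕ)
  · rw [if_pos hij, if_pos (Fin.ext hij.symm), mul_one]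
  · rw [if_neg hij, if_neg fun hc => hij (congrArg Fin.val hc.symm), mul_zero]

lemma CF_MV_mul_MU (N : ℕ) (q u v : ℂ) (hqN : q ^ N = 1) :
    MV N v * MU N q u = q ^ 4 • (MU N q u * MV N v) := by
  ext i j
  simp only [MU, Matrix.mul_diagonal, Matrix.diagonal_mul, Matrix.smul_apply, MV,
    Matrix.of_apply, smul_eq_mul]
  by_cases hc : (j : ℕ) = ((i : ℕ) + 1) % N
  · simp only [if_pos hc, hc]
    have key : q ^ (4 * (((i : ℕ) + 1) % N)) = q ^ (4 * (i : ℕ) + 4) := by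
      apply CF_pow_congr_mod N q hqN
      have h1 : (4 * (((i : ℕ) + 1) % N)) % N = (4 * ((i : ℕ) + 1)) % N :=
        Nat.ModEq.mul_left 4 (Nat.mod_modEq _ N)
      rw [h1]; ring_nf
    rw [key, pow_add]
    ring
  · simp only [if_neg hc]
    ring

lemma CF_comm_of_inv {n : ℕ} {X Y Yi : Matrix (Fin n) (Fin n) ℂ} (h : Commute X Y)
    (h1 : Y * Yi = 1) (h2 : Yi * Y = 1) : Commute X Yi := by
  calc X * Yi = Yi * Y * (X * Yi) := by rw [h2, one_mul]
    _ = Yi * (Y * X) * Yi := by noncomm_ring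
    _ = Yi * (X * Y) * Yi := by rw [← h.eq]
    _ = Yi * X * (Y * Yi) := by noncomm_ring
    _ = Yi * X := by rw [h1, mul_one]

lemma CF_conj_inv {n : ℕ} {U Ui P P' Pi P'i : Matrix (Fin n) (Fin n) ℂ}
    (hUUi : U * Ui = 1) (hUiU : Ui * U = 1)
    (hPPi : P * Pi = 1)
    (hP'iP' : P'i * P' = 1)
    (h : U * P' = P * U) : Ui * Pi = P'i * Ui := by
  have hUiP : Ui * P = P' * Ui := by
    calc Ui * P = Ui * P * (U * Ui) := by rw [hUUi, mul_one]
      _ = Ui * (P * U) * Ui := by noncomm_ring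
      _ = Ui * (U * P') * Ui := by rw [← h]
      _ = (Ui * U) * (P' * Ui) := by noncomm_ring
      _ = P' * Ui := by rw [hUiU, one_mul]
  calc Ui * Pi = P'i * (P' * (Ui * Pi)) := by rw [← mul_assoc, hP'iP', one_mul]
    _ = P'i * ((P' * Ui) * Pi) := by noncomm_ring
    _ = P'i * ((Ui * P) * Pi) := by rw [← hUiP]
    _ = P'i * (Ui * (P * Pi)) := by noncomm_ring
    _ = P'i * Ui := by rw [hPPi, mul_one]

lemma CF_geom_series {n N : ℕ} (hN : Odd N) {A : Matrix (Fin n) (Fin n) ℂ} {w d : ℂ}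
    (hA : A ^ N = w • 1) (hd : d ^ N = 1) (hw : (1 : ℂ) + w ≠ 0) :
    (1 + d • A) * ((1 + w)⁻¹ • ∑ k ∈ Finset.range N, (-d) ^ k • A ^ k) = 1 ∧
    ((1 + w)⁻¹ • ∑ k ∈ Finset.range N, (-d) ^ k • A ^ k) * (1 + d • A) = 1 := by
  set S : Matrix (Fin n) (Fin n) ℂ := ∑ k ∈ Finset.range N, (-d) ^ k • A ^ k with hS
  have key : (1 + d • A) * S = (1 + w) • 1 := by
    have hAS : A * S = ∑ k ∈ Finset.range N, (-d) ^ k • A ^ (k + 1) := by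
      rw [hS, Finset.mul_sum]
      refine Finset.sum_congr rfl fun k _ => ?_
      rw [mul_smul_comm, ← pow_succ']
    calc (1 + d • A) * S = S + d • (A * S) := by
          rw [add_mul, one_mul, smul_mul_assoc]
      _ = ∑ k ∈ Finset.range N, ((-d) ^ k • A ^ k - (-d) ^ (k + 1) • A ^ (k + 1)) := by
          rw [hAS, Finset.smul_sum, hS, ← Finset.sum_add_distrib]
          refine Finset.sum_congr rfl fun k _ => ?_
          rw [smul_smul, sub_eq_add_neg, ← neg_smul]
          congr 2
          rw [pow_succ]
          ring
      _ = (-d) ^ 0 • A ^ 0 - (-d) ^ N • A ^ N := Finset.sum_range_sub' _ _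
      _ = (1 + w) • 1 := by
          rw [hA, pow_zero, pow_zero, one_smul, Odd.neg_pow hN, hd, smul_smul]
          rw [sub_eq_add_neg, ← neg_smul, add_smul, one_smul]
          norm_num
  have hcomm : S * (1 + d • A) = (1 + d • A) * S := by
    have hAS : Commute A S := by
      rw [hS]
      refine Commute.sum_right _ (fun k => (-d) ^ k • A ^ k) A fun k _ => ?_
      exact ((Commute.refl A).pow_right k).smul_right _
    exact (((Commute.one_left S).add_left (hAS.smul_left d))).eq.symm
  have hfin : ((1 + w)⁻¹ * (1 + w)) • (1 : Matrix (Fin n) (Fin n) ℂ) = 1 := by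
    rw [inv_mul_cancel₀ hw, one_smul]
  constructor
  · rw [mul_smul_comm, key, smul_smul, hfin]
  · rw [smul_mul_assoc, hcomm, key, smul_smul, hfin]

end Helpers

set_option maxHeartbeats 2000000 in
/-- The images `L_U, L_V, L_W` of `U, V, W` under `χ_{u,v,h} ∘ ℒ` again satisfy the
Chekhov–Fock relations, with the same central element `q²·L_U·L_V·L_W = h`. -/
theorem stmt10 (N : ℕ) (hN : Odd N) (hNpos : 0 < N) (q : ℂ) (hq : IsPrimitiveRoot q N)
    (u v h : ℂ) (hu : u ≠ 0) (hv : v ≠ 0) (hh : h ≠ 0) (hvn : v ^ N ≠ -1)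
    (LU LV LW : Matrix (Fin N) (Fin N) ℂ)
    (hLU : LU = (1 + q • (MV N v)⁻¹)⁻¹ * (1 + q ^ 3 • (MV N v)⁻¹)⁻¹ * MU N q u)
    (hLV : LV = (1 + q • MV N v) * (1 + q ^ 3 • MV N v) * MW N q u v h)
    (hLW : LW = (MV N v)⁻¹) :
    LV * LU = q ^ 4 • (LU * LV) ∧
    LW * LV = q ^ 4 • (LV * LW) ∧
    LU * LW = q ^ 4 • (LW * LU) ∧
    q ^ 2 • (LU * LV * LW) = h • (1 : Matrix (Fin N) (Fin N) ℂ) := by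
  have hN0 : N ≠ 0 := hNpos.ne'
  have hqN : q ^ N = 1 := hq.pow_eq_one
  have hq0 : q ≠ 0 := by
    intro h0
    rw [h0, zero_pow hN0] at hqN
    exact zero_ne_one hqN
  have hq40 : (q : ℂ) ^ 4 ≠ 0 := pow_ne_zero _ hq0
  have hq30 : (q : ℂ) ^ 3 ≠ 0 := pow_ne_zero _ hq0
  have hw : (1 : ℂ) + v ^ N ≠ 0 := by
    intro h0
    exact hvn (by linear_combination h0)
  have hvN0 : v ^ N ≠ 0 := pow_ne_zero _ hv
  set A := MV N v with hAdef
  set Uu := MU N q u with hUdef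
  have hq3N : (q ^ 3) ^ N = 1 := by rw [← pow_mul, mul_comm, pow_mul, hqN, one_pow]
  have hqiN : (q⁻¹) ^ N = 1 := by rw [inv_pow, hqN, inv_one]
  have hq3iN : ((q ^ 3)⁻¹) ^ N = 1 := by rw [inv_pow, hq3N, inv_one]
  have hApN : A ^ N = v ^ N • 1 := CF_MV_pow_N N hNpos v
  have hBexp : A * ((v ^ N)⁻¹ • A ^ (N - 1)) = 1 := by
    rw [mul_smul_comm, ← pow_succ', Nat.sub_add_cancel hNpos, hApN, smul_smul,
      inv_mul_cancel₀ hvN0, one_smul]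
  have hBexp' : ((v ^ N)⁻¹ • A ^ (N - 1)) * A = 1 := by
    rw [smul_mul_assoc, ← pow_succ, Nat.sub_add_cancel hNpos, hApN, smul_smul,
      inv_mul_cancel₀ hvN0, one_smul]
  have hBeq : A⁻¹ = (v ^ N)⁻¹ • A ^ (N - 1) := Matrix.inv_eq_right_inv hBexp
  set B := A⁻¹ with hBdef
  have hAB : A * B = 1 := by rw [hBeq]; exact hBexp
  have hBA : B * A = 1 := by rw [hBeq]; exact hBexp'
  set Ui : Matrix (Fin N) (Fin N) ℂ := Matrix.diagonal fun i => (u * q ^ (4 * (i : ℕ)))⁻¹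
    with hUidef
  have hUUi : Uu * Ui = 1 := by
    rw [hUdef, hUidef]
    simp only [MU]
    rw [Matrix.diagonal_mul_diagonal]
    have hfun : (fun i : Fin N => u * q ^ (4 * (i : ℕ)) * (u * q ^ (4 * (i : ℕ)))⁻¹)
        = fun _ => (1 : ℂ) :=
      funext fun i => mul_inv_cancel₀ (mul_ne_zero hu (pow_ne_zero _ hq0))
    rw [hfun, Matrix.diagonal_one]
  have hUiU : Ui * Uu = 1 := by
    rw [hUdef, hUidef]
    simp only [MU]
    rw [Matrix.diagonal_mul_diagonal]
    have hfun : (fun i : Fin N => (u * q ^ (4 * (i : ℕ)))⁻¹ * (u * q ^ (4 * (i : ℕ))))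
        = fun _ => (1 : ℂ) :=
      funext fun i => inv_mul_cancel₀ (mul_ne_zero hu (pow_ne_zero _ hq0))
    rw [hfun, Matrix.diagonal_one]
  have hAU : A * Uu = q ^ 4 • (Uu * A) := CF_MV_mul_MU N q u v hqN
  have hUA : Uu * A = (q ^ 4)⁻¹ • (A * Uu) := by
    rw [hAU, smul_smul, inv_mul_cancel₀ hq40, one_smul]
  have hUB : Uu * B = q ^ 4 • (B * Uu) := by
    calc Uu * B = (B * A) * (Uu * B) := by rw [hBA, one_mul]
      _ = B * (A * Uu) * B := by noncomm_ring
      _ = B * (q ^ 4 • (Uu * A)) * B := by rw [hAU]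
      _ = q ^ 4 • (B * Uu * (A * B)) := by
          rw [mul_smul_comm, smul_mul_assoc]
          congr 1
          noncomm_ring
      _ = q ^ 4 • (B * Uu) := by rw [hAB, mul_one]
  have hBUi : B * Ui = q ^ 4 • (Ui * B) := by
    calc B * Ui = (Ui * Uu) * (B * Ui) := by rw [hUiU, one_mul]
      _ = Ui * (Uu * B) * Ui := by noncomm_ring
      _ = Ui * (q ^ 4 • (B * Uu)) * Ui := by rw [hUB]
      _ = q ^ 4 • (Ui * B * (Uu * Ui)) := by
          rw [mul_smul_comm, smul_mul_assoc]
          congr 1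
          noncomm_ring
      _ = q ^ 4 • (Ui * B) := by rw [hUUi, mul_one]
  have hUmulA : ∀ c : ℂ, Uu * (1 + c • A) = (1 + (c * (q ^ 4)⁻¹) • A) * Uu := by
    intro c
    rw [mul_add, mul_one, mul_smul_comm, hUA, smul_smul, add_mul, one_mul, smul_mul_assoc]
  have hUmulB : ∀ c : ℂ, Uu * (1 + c • B) = (1 + (c * q ^ 4) • B) * Uu := by
    intro c
    rw [mul_add, mul_one, mul_smul_comm, hUB, smul_smul, add_mul, one_mul, smul_mul_assoc]
  have s1 : q * (q ^ 4)⁻¹ = (q ^ 3)⁻¹ := by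
    field_simp
  have s3 : q ^ 3 * (q ^ 4)⁻¹ = q⁻¹ := by
    field_simp
  have t1 : q⁻¹ * q ^ 4 = q ^ 3 := by
    field_simp
  have t3 : (q ^ 3)⁻¹ * q ^ 4 = q := by
    field_simp
  have hs4 : (q ^ 3)⁻¹ * q⁻¹ = (q ^ 4)⁻¹ := by rw [← mul_inv, ← pow_succ]
  obtain ⟨hE1G, hGE1⟩ := CF_geom_series (d := q) hN hApN hqN hw
  obtain ⟨hE3G, hGE3⟩ := CF_geom_series (d := q ^ 3) hN hApN hq3N hw
  obtain ⟨hEm1G, hGEm1⟩ := CF_geom_series (d := q⁻¹) hN hApN hqiN hw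
  obtain ⟨hEm3G, hGEm3⟩ := CF_geom_series (d := (q ^ 3)⁻¹) hN hApN hq3iN hw
  set G1 := (1 + v ^ N)⁻¹ • ∑ k ∈ Finset.range N, (-q) ^ k • A ^ k with hG1def
  set G3 := (1 + v ^ N)⁻¹ • ∑ k ∈ Finset.range N, (-(q ^ 3)) ^ k • A ^ k with hG3def
  set Gm1 := (1 + v ^ N)⁻¹ • ∑ k ∈ Finset.range N, (-q⁻¹) ^ k • A ^ k with hGm1def
  set Gm3 := (1 + v ^ N)⁻¹ • ∑ k ∈ Finset.range N, (-(q ^ 3)⁻¹) ^ k • A ^ k with hGm3def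
  have mk_inv : ∀ (c c' : ℂ) (E G : Matrix (Fin N) (Fin N) ℂ), c * c' = 1 →
      1 + c' • A = E → E * G = 1 → G * E = 1 →
      (1 + c • B) * (c' • (G * A)) = 1 ∧ (c' • (G * A)) * (1 + c • B) = 1 := by
    intro c c' E G hcc' hE hEG hGE
    have hfact : 1 + c • B = c • (B * E) := by
      rw [← hE, mul_add, mul_one, mul_smul_comm, hBA, smul_add, smul_smul, hcc', one_smul,
        add_comm]
    constructor
    · rw [hfact, smul_mul_assoc, mul_smul_comm, smul_smul, hcc', one_smul]
      calc B * E * (G * A) = B * (E * G) * A := by noncomm_ring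
        _ = 1 := by rw [hEG, mul_one]; exact hBA
    · rw [hfact, mul_smul_comm, smul_mul_assoc, smul_smul, hcc', one_smul]
      calc G * A * (B * E) = G * (A * B) * E := by noncomm_ring
        _ = 1 := by rw [hAB, mul_one]; exact hGE
  obtain ⟨hPGp, hGpP⟩ := mk_inv q q⁻¹ (1 + q⁻¹ • A) Gm1 (mul_inv_cancel₀ hq0) rfl hEm1G hGEm1
  obtain ⟨hQGq, hGqQ⟩ :=
    mk_inv (q ^ 3) (q ^ 3)⁻¹ (1 + (q ^ 3)⁻¹ • A) Gm3 (mul_inv_cancel₀ hq30) rfl hEm3G hGEm3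
  obtain ⟨hP'G, hGP'⟩ :=
    mk_inv ((q ^ 3)⁻¹) (q ^ 3) (1 + q ^ 3 • A) G3 (inv_mul_cancel₀ hq30) rfl hE3G hGE3
  obtain ⟨hQ'G, hGQ'⟩ := mk_inv (q⁻¹) q (1 + q • A) G1 (inv_mul_cancel₀ hq0) rfl hE1G hGE1
  set Gp := q⁻¹ • (Gm1 * A) with hGpdef
  set Gq := (q ^ 3)⁻¹ • (Gm3 * A) with hGqdef
  set Gp' := q ^ 3 • (G3 * A) with hGp'def
  set Gq' := q • (G1 * A) with hGq'def
  set P := 1 + q • B with hPdef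
  set Q := 1 + q ^ 3 • B with hQdef
  set P' := 1 + (q ^ 3)⁻¹ • B with hP'def
  set Q' := 1 + q⁻¹ • B with hQ'def
  set P₁ := 1 + q • A with hP₁def
  set P₃ := 1 + q ^ 3 • A with hP₃def
  have hPinv : P⁻¹ = Gp := Matrix.inv_eq_right_inv hPGp
  have hQinv : Q⁻¹ = Gq := Matrix.inv_eq_right_inv hQGq
  have hPPi : P * P⁻¹ = 1 := by rw [hPinv]; exact hPGp
  have hPiP : P⁻¹ * P = 1 := by rw [hPinv]; exact hGpP
  have hQQi : Q * Q⁻¹ = 1 := by rw [hQinv]; exact hQGq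
  have hQiQ : Q⁻¹ * Q = 1 := by rw [hQinv]; exact hGqQ
  have hCAB : Commute A B := hAB.trans hBA.symm
  have mkc : ∀ (X Y : Matrix (Fin N) (Fin N) ℂ) (c : ℂ), Commute X Y → Commute X (1 + c • Y) :=
    fun X Y c hxy => (Commute.one_right X).add_right (hxy.smul_right c)
  have hCAP : Commute A P := mkc A B q hCAB
  have hCAQ : Commute A Q := mkc A B (q ^ 3) hCAB
  have hCAQ' : Commute A Q' := mkc A B q⁻¹ hCAB
  have hCBP : Commute B P := mkc B B q (Commute.refl B)
  have hCBQ : Commute B Q := mkc B B (q ^ 3) (Commute.refl B)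
  have hCBP' : Commute B P' := mkc B B ((q ^ 3)⁻¹) (Commute.refl B)
  have hCBQ' : Commute B Q' := mkc B B q⁻¹ (Commute.refl B)
  have hCBP₁ : Commute B P₁ := mkc B A q hCAB.symm
  have hCBP₃ : Commute B P₃ := mkc B A (q ^ 3) hCAB.symm
  have hCAPi : Commute A P⁻¹ := CF_comm_of_inv hCAP hPPi hPiP
  have hCAQi : Commute A Q⁻¹ := CF_comm_of_inv hCAQ hQQi hQiQ
  have hCBPi : Commute B P⁻¹ := CF_comm_of_inv hCBP hPPi hPiP
  have hCBQi : Commute B Q⁻¹ := CF_comm_of_inv hCBQ hQQi hQiQ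
  have hUAinv : (Uu * A)⁻¹ = B * Ui := by
    apply Matrix.inv_eq_right_inv
    calc Uu * A * (B * Ui) = Uu * (A * B) * Ui := by noncomm_ring
      _ = 1 := by rw [hAB, mul_one, hUUi]
  set c₀ := (q ^ 2)⁻¹ * h with hc₀def
  have hWval : MW N q u v h = c₀ • (B * Ui) := by
    simp only [MW]
    rw [← hUdef, ← hAdef, hUAinv, hc₀def]
  rw [hWval] at hLV
  have hAAB : A * A * B = A := by rw [mul_assoc, hAB, mul_one]
  have hUW : Uu * (c₀ • (B * Ui)) = (c₀ * q ^ 4) • B := by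
    calc Uu * (c₀ • (B * Ui)) = c₀ • (Uu * B * Ui) := by rw [mul_smul_comm, mul_assoc]
      _ = c₀ • ((q ^ 4 • (B * Uu)) * Ui) := by rw [hUB]
      _ = (c₀ * q ^ 4) • (B * (Uu * Ui)) := by
          rw [smul_mul_assoc, smul_smul]
          congr 1
          noncomm_ring
      _ = (c₀ * q ^ 4) • B := by rw [hUUi, mul_one]
  have hAQ : A * Q = A + q ^ 3 • 1 := by
    rw [hQdef, mul_add, mul_one, mul_smul_comm, hAB]
  have hAP : A * P = A + q • 1 := by
    rw [hPdef, mul_add, mul_one, mul_smul_comm, hAB]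
  have hAQ' : A * Q' = A + q⁻¹ • 1 := by
    rw [hQ'def, mul_add, mul_one, mul_smul_comm, hAB]
  have hAP' : A * P' = A + (q ^ 3)⁻¹ • 1 := by
    rw [hP'def, mul_add, mul_one, mul_smul_comm, hAB]
  have hE3m : (1 : Matrix (Fin N) (Fin N) ℂ) + (q ^ 3)⁻¹ • A = (q ^ 3)⁻¹ • (A * Q) := by
    rw [hAQ, smul_add, smul_smul, inv_mul_cancel₀ hq30, one_smul, add_comm]
  have hE1m : (1 : Matrix (Fin N) (Fin N) ℂ) + q⁻¹ • A = q⁻¹ • (A * P) := by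
    rw [hAP, smul_add, smul_smul, inv_mul_cancel₀ hq0, one_smul, add_comm]
  have hP₁fact : P₁ = q • (A * Q') := by
    rw [hAQ', smul_add, smul_smul, mul_inv_cancel₀ hq0, one_smul, add_comm, hP₁def]
  have hP₃fact : P₃ = q ^ 3 • (A * P') := by
    rw [hAP', smul_add, smul_smul, mul_inv_cancel₀ hq30, one_smul, add_comm, hP₃def]
  have hAQAP : A * Q * (A * P) = A * A * (Q * P) := by
    calc A * Q * (A * P) = A * (Q * A) * P := by noncomm_ring
      _ = A * (A * Q) * P := by rw [← hCAQ.eq]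
      _ = A * A * (Q * P) := by noncomm_ring
  have hUP13 : Uu * (P₁ * P₃) = (q ^ 4)⁻¹ • (A * A * (Q * P) * Uu) := by
    calc Uu * (P₁ * P₃) = (Uu * P₁) * P₃ := by rw [mul_assoc]
      _ = (1 + (q ^ 3)⁻¹ • A) * (Uu * P₃) := by
          rw [hP₁def, hUmulA q, s1, mul_assoc]
      _ = (1 + (q ^ 3)⁻¹ • A) * ((1 + q⁻¹ • A) * Uu) := by
          rw [hP₃def, hUmulA (q ^ 3), s3]
      _ = ((q ^ 3)⁻¹ • (A * Q)) * ((q⁻¹ • (A * P)) * Uu) := by rw [hE3m, hE1m]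
      _ = ((q ^ 3)⁻¹ * q⁻¹) • (A * Q * (A * P) * Uu) := by
          rw [smul_mul_assoc, smul_mul_assoc, mul_smul_comm, smul_smul]
          congr 1
          noncomm_ring
      _ = (q ^ 4)⁻¹ • (A * A * (Q * P) * Uu) := by rw [hs4, hAQAP]
  have hPQcancel : P⁻¹ * Q⁻¹ * (A * A * (Q * P)) = A * A := by
    have hc1 : Commute (P⁻¹ * Q⁻¹) A := hCAPi.symm.mul_left hCAQi.symm
    have hc : Commute (P⁻¹ * Q⁻¹) (A * A) := hc1.mul_right hc1
    calc P⁻¹ * Q⁻¹ * (A * A * (Q * P)) = (P⁻¹ * Q⁻¹ * (A * A)) * (Q * P) := by noncomm_ring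
      _ = (A * A * (P⁻¹ * Q⁻¹)) * (Q * P) := by rw [hc.eq]
      _ = A * A * (P⁻¹ * (Q⁻¹ * Q) * P) := by noncomm_ring
      _ = A * A := by rw [hQiQ, mul_one, hPiP, mul_one]
  have hkey : LU * LV = c₀ • A := by
    rw [hLU, hLV]
    calc P⁻¹ * Q⁻¹ * Uu * (P₁ * P₃ * (c₀ • (B * Ui)))
        = P⁻¹ * Q⁻¹ * (Uu * (P₁ * P₃)) * (c₀ • (B * Ui)) := by noncomm_ring
      _ = P⁻¹ * Q⁻¹ * ((q ^ 4)⁻¹ • (A * A * (Q * P) * Uu)) * (c₀ • (B * Ui)) := by rw [hUP13]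
      _ = (q ^ 4)⁻¹ • (P⁻¹ * Q⁻¹ * (A * A * (Q * P)) * (Uu * (c₀ • (B * Ui)))) := by
          simp only [mul_smul_comm, smul_mul_assoc, smul_smul]
          try congr 1
          all_goals first | rfl | noncomm_ring | ring1
      _ = (q ^ 4)⁻¹ • (A * A * ((c₀ * q ^ 4) • B)) := by rw [hPQcancel, hUW]
      _ = ((q ^ 4)⁻¹ * (c₀ * q ^ 4)) • (A * A * B) := by rw [mul_smul_comm, smul_smul]
      _ = c₀ • A := by
          rw [hAAB, show (q ^ 4)⁻¹ * (c₀ * q ^ 4) = c₀ by field_simp]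
  have hUP'eq : Uu * P' = P * Uu := by rw [hP'def, hUmulB ((q ^ 3)⁻¹), t3, hPdef]
  have hUQ'eq : Uu * Q' = Q * Uu := by rw [hQ'def, hUmulB q⁻¹, t1, hQdef]
  have hUiPi : Ui * P⁻¹ = Gp' * Ui := CF_conj_inv hUUi hUiU hPPi hGP' hUP'eq
  have hUiQi : Ui * Q⁻¹ = Gq' * Ui := CF_conj_inv hUUi hUiU hQQi hGQ' hUQ'eq
  have hUiPQ : Ui * (P⁻¹ * Q⁻¹) = Gp' * (Gq' * Ui) := by
    calc Ui * (P⁻¹ * Q⁻¹) = (Ui * P⁻¹) * Q⁻¹ := by rw [mul_assoc]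
      _ = Gp' * (Ui * Q⁻¹) := by rw [hUiPi, mul_assoc]
      _ = Gp' * (Gq' * Ui) := by rw [hUiQi]
  have core2 : P₁ * P₃ * B * (Gp' * Gq') = q ^ 4 • A := by
    have hmat : A * Q' * (A * P') * B * (Gp' * Gq') = A := by
      calc A * Q' * (A * P') * B * (Gp' * Gq')
          = A * (Q' * A) * (P' * B * (Gp' * Gq')) := by noncomm_ring
        _ = A * (A * Q') * (P' * B * (Gp' * Gq')) := by rw [← hCAQ'.eq]
        _ = A * A * (Q' * (P' * B) * (Gp' * Gq')) := by noncomm_ring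
        _ = A * A * (Q' * (B * P') * (Gp' * Gq')) := by rw [← hCBP'.eq]
        _ = A * A * ((Q' * B) * (P' * Gp' * Gq')) := by noncomm_ring
        _ = A * A * ((B * Q') * (P' * Gp' * Gq')) := by rw [← hCBQ'.eq]
        _ = A * A * (B * (Q' * ((P' * Gp') * Gq'))) := by noncomm_ring
        _ = A * A * (B * (Q' * Gq')) := by rw [hP'G, one_mul]
        _ = A * A * B := by rw [hQ'G, mul_one]
        _ = A := hAAB
    calc P₁ * P₃ * B * (Gp' * Gq')
        = (q • (A * Q')) * (q ^ 3 • (A * P')) * B * (Gp' * Gq') := by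
          rw [← hP₁fact, ← hP₃fact]
      _ = (q * q ^ 3) • (A * Q' * (A * P') * B * (Gp' * Gq')) := by
          rw [smul_mul_assoc, mul_smul_comm, smul_smul, smul_mul_assoc, smul_mul_assoc]
      _ = q ^ 4 • A := by rw [hmat, show q * q ^ 3 = q ^ 4 by ring]
  have hkey2 : LV * LU = (c₀ * q ^ 4) • A := by
    rw [hLU, hLV]
    calc P₁ * P₃ * (c₀ • (B * Ui)) * (P⁻¹ * Q⁻¹ * Uu)
        = c₀ • (P₁ * P₃ * B * (Ui * (P⁻¹ * Q⁻¹)) * Uu) := by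
          simp only [mul_smul_comm, smul_mul_assoc, smul_smul]
          try congr 1
          all_goals first | rfl | noncomm_ring | ring1
      _ = c₀ • (P₁ * P₃ * B * (Gp' * (Gq' * Ui)) * Uu) := by rw [hUiPQ]
      _ = c₀ • (P₁ * P₃ * B * (Gp' * Gq') * (Ui * Uu)) := by
          congr 1
          noncomm_ring
      _ = c₀ • (P₁ * P₃ * B * (Gp' * Gq')) := by rw [hUiU, mul_one]
      _ = c₀ • ((q ^ 4 : ℂ) • A) := by rw [core2]
      _ = (c₀ * q ^ 4) • A := by rw [smul_smul]
  have goal1 : LV * LU = q ^ 4 • (LU * LV) := by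
    rw [hkey, hkey2, smul_smul, mul_comm c₀]
  have hBW : B * (c₀ • (B * Ui)) = q ^ 4 • ((c₀ • (B * Ui)) * B) := by
    calc B * (c₀ • (B * Ui)) = c₀ • (B * (B * Ui)) := by rw [mul_smul_comm]
      _ = c₀ • (B * (q ^ 4 • (Ui * B))) := by rw [hBUi]
      _ = (c₀ * q ^ 4) • (B * (Ui * B)) := by rw [mul_smul_comm, smul_smul]
      _ = q ^ 4 • ((c₀ • (B * Ui)) * B) := by
          simp only [mul_smul_comm, smul_mul_assoc, smul_smul]
          try congr 1
          all_goals first | rfl | noncomm_ring | ring1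
  have goal2 : LW * LV = q ^ 4 • (LV * LW) := by
    rw [hLV, hLW]
    calc B * (P₁ * P₃ * (c₀ • (B * Ui)))
        = (B * P₁) * (P₃ * (c₀ • (B * Ui))) := by noncomm_ring
      _ = (P₁ * B) * (P₃ * (c₀ • (B * Ui))) := by rw [hCBP₁.eq]
      _ = P₁ * (B * P₃) * (c₀ • (B * Ui)) := by noncomm_ring
      _ = P₁ * (P₃ * B) * (c₀ • (B * Ui)) := by rw [hCBP₃.eq]
      _ = P₁ * P₃ * (B * (c₀ • (B * Ui))) := by noncomm_ring
      _ = P₁ * P₃ * (q ^ 4 • ((c₀ • (B * Ui)) * B)) := by rw [hBW]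
      _ = q ^ 4 • (P₁ * P₃ * (c₀ • (B * Ui)) * B) := by
          simp only [mul_smul_comm, smul_mul_assoc, smul_smul]
          try congr 1
          all_goals first | rfl | noncomm_ring | ring1
  have goal3 : LU * LW = q ^ 4 • (LW * LU) := by
    rw [hLU, hLW]
    calc P⁻¹ * Q⁻¹ * Uu * B = P⁻¹ * Q⁻¹ * (Uu * B) := by rw [mul_assoc]
      _ = P⁻¹ * Q⁻¹ * (q ^ 4 • (B * Uu)) := by rw [hUB]
      _ = q ^ 4 • (P⁻¹ * (Q⁻¹ * B) * Uu) := by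
          simp only [mul_smul_comm, smul_mul_assoc, smul_smul]
          try congr 1
          all_goals first | rfl | noncomm_ring | ring1
      _ = q ^ 4 • (P⁻¹ * (B * Q⁻¹) * Uu) := by rw [← hCBQi.eq]
      _ = q ^ 4 • ((P⁻¹ * B) * (Q⁻¹ * Uu)) := by
          congr 1
          noncomm_ring
      _ = q ^ 4 • ((B * P⁻¹) * (Q⁻¹ * Uu)) := by rw [← hCBPi.eq]
      _ = q ^ 4 • (B * (P⁻¹ * Q⁻¹ * Uu)) := by
          congr 1
          noncomm_ring
  have goal4 : q ^ 2 • (LU * LV * LW) = h • (1 : Matrix (Fin N) (Fin N) ℂ) := by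
    rw [hLW, hkey, smul_mul_assoc, hAB, smul_smul,
      show q ^ 2 * c₀ = h by rw [hc₀def]; field_simp]
  exact ⟨goal1, goal2, goal3, goal4⟩
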